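/- Let C be a full-dimensional pointed closed convex cone in ℝ^d, let Γ be the set of points of C lying outside some (possibly empty) truncation of C, let V be a countable subset of C, let U = V + Γ be the Minkowski sum, and let H be a truncating halfspace for C. Then D = U ∩ H is bounded and Lebesgue measurable, and the limit over positive integers k of #(kD ∩ ℤ^d)/k^d equals the Lebesgue measure of D, where kD = {ku : u ∈ D}. -/

import Mathlib

open Filter MeasureTheory
open scoped Pointwise

/-- The standard inner product of two vectors of `ℝ^d`. -/
def pairing {d : ℕ} (u a : Fin d → ℝ) : ℝ := ∑ i, u i * a i

/-- The set of lattice points `ℤ^d ⊆ ℝ^d`. -/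
def latticePts (d : ℕ) : Set (Fin d → ℝ) := {u | ∀ i, ∃ z : ℤ, u i = (z : ℝ)}

section helpers
variable {d : ℕ}

lemma pairing_continuous (b : Fin d → ℝ) : Continuous fun u : Fin d → ℝ => pairing u b := by
  unfold pairing
  exact continuous_finset_sum _ fun i _ => (continuous_apply i).mul continuous_const

lemma pairing_smul (c : ℝ) (u b : Fin d → ℝ) : pairing (c • u) b = c * pairing u b := by
  simp [pairing, Finset.mul_sum, mul_assoc]

lemma pairing_add (u v b : Fin d → ℝ) : pairing (u + v) b = pairing u b + pairing v b := by
  simp [pairing, add_mul, Finset.sum_add_distrib]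

lemma pairing_zero (b : Fin d → ℝ) : pairing (0 : Fin d → ℝ) b = 0 := by
  simp [pairing]

lemma pairing_single (i : Fin d) (b : Fin d → ℝ) :
    pairing (Pi.single i 1) b = b i := by
  simp [pairing, Pi.single_apply]

lemma bounded_trunc (C : Set (Fin d → ℝ)) (hCclosed : IsClosed C)
    (hCsmul : ∀ c : ℝ, 0 ≤ c → ∀ u ∈ C, c • u ∈ C)
    (b : Fin d → ℝ) (hb : ∀ u ∈ C, u ≠ 0 → 0 < pairing u b)
    (β : ℝ) (hβ : 0 ≤ β) :
    Bornology.IsBounded (C ∩ {u | pairing u b ≤ β}) := by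
  by_cases hK : (C ∩ Metric.sphere 0 1).Nonempty
  · have hKcpt : IsCompact (C ∩ Metric.sphere 0 1) :=
      (isCompact_sphere (0 : Fin d → ℝ) 1).inter_left hCclosed
    obtain ⟨x₀, hx₀, hmin⟩ := hKcpt.exists_isMinOn hK (pairing_continuous b).continuousOn
    have hx₀C : x₀ ∈ C := hx₀.1
    have hx₀n : ‖x₀‖ = 1 := by simpa using hx₀.2
    have hx₀ne : x₀ ≠ 0 := by
      intro h; rw [h] at hx₀n; simp at hx₀n
    have hm : 0 < pairing x₀ b := hb x₀ hx₀C hx₀ne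
    refine (Metric.isBounded_closedBall (x := (0 : Fin d → ℝ)) (r := β / pairing x₀ b)).subset ?_
    rintro u ⟨huC, huβ⟩
    simp only [Metric.mem_closedBall, dist_zero_right]
    rcases eq_or_ne u 0 with rfl | hu
    · simpa using div_nonneg hβ hm.le
    · have hnorm : (0:ℝ) < ‖u‖ := norm_pos_iff.2 hu
      have h1 : ‖u‖⁻¹ • u ∈ C ∩ Metric.sphere 0 1 := by
        refine ⟨hCsmul _ (inv_nonneg.2 hnorm.le) u huC, ?_⟩
        simp [norm_smul, abs_of_pos (inv_pos.2 hnorm), inv_mul_cancel₀ hnorm.ne']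
      have h2 : pairing x₀ b ≤ pairing (‖u‖⁻¹ • u) b := hmin h1
      rw [pairing_smul] at h2
      have h3 : pairing x₀ b * ‖u‖ ≤ pairing u b := by
        have := mul_le_mul_of_nonneg_right h2 hnorm.le
        rw [mul_assoc, mul_comm (pairing u b), ← mul_assoc, inv_mul_cancel₀ hnorm.ne',
          one_mul] at this
        linarith
      rw [le_div_iff₀ hm]
      calc ‖u‖ * pairing x₀ b = pairing x₀ b * ‖u‖ := mul_comm _ _
        _ ≤ pairing u b := h3
        _ ≤ β := huβ
  · have hC0 : C ⊆ {0} := by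
      intro u huC
      by_contra hu
      have hnorm : (0:ℝ) < ‖u‖ := norm_pos_iff.2 hu
      exact hK ⟨‖u‖⁻¹ • u, hCsmul _ (inv_nonneg.2 hnorm.le) u huC, by
        simp [norm_smul, abs_of_pos (inv_pos.2 hnorm), inv_mul_cancel₀ hnorm.ne']⟩
    exact (Set.finite_singleton (0 : Fin d → ℝ)).isBounded.subset
      ((Set.inter_subset_left).trans hC0)

end helpers

section part2
variable {d : ℕ}

lemma smul_mem_interior' {C : Set (Fin d → ℝ)} (hCsmul : ∀ c : ℝ, 0 ≤ c → ∀ u ∈ C, c • u ∈ C)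
    {t : ℝ} (ht : 0 < t) {x : Fin d → ℝ} (hx : x ∈ interior C) : t • x ∈ interior C := by
  obtain ⟨ε, εpos, hball⟩ := Metric.isOpen_iff.1 isOpen_interior x hx
  refine mem_interior.2 ⟨Metric.ball (t • x) (t * ε), ?_, Metric.isOpen_ball,
    Metric.mem_ball_self (by positivity)⟩
  intro z hz
  have h1 : t⁻¹ • z ∈ Metric.ball x ε := by
    rw [Metric.mem_ball, dist_eq_norm] at hz ⊢
    have : t⁻¹ • z - x = t⁻¹ • (z - t • x) := by
      rw [smul_sub, smul_smul, inv_mul_cancel₀ ht.ne', one_smul]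
    rw [this, norm_smul, Real.norm_eq_abs, abs_of_pos (inv_pos.2 ht)]
    calc t⁻¹ * ‖z - t • x‖ < t⁻¹ * (t * ε) := by
          exact mul_lt_mul_of_pos_left hz (inv_pos.2 ht)
      _ = ε := by field_simp
  have h2 : t⁻¹ • z ∈ C := interior_subset (hball h1)
  have h3 : z = t • (t⁻¹ • z) := by rw [smul_smul, mul_inv_cancel₀ ht.ne', one_smul]
  rw [h3]; exact hCsmul t ht.le _ h2

lemma closure_add_int_mem {U C : Set (Fin d → ℝ)}
    (hUC : ∀ u ∈ U, ∀ c ∈ C, u + c ∈ U)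
    {c : Fin d → ℝ} (hc : c ∈ interior C) {x : Fin d → ℝ} (hx : x ∈ closure U) :
    x + c ∈ interior U := by
  obtain ⟨ε, εpos, hball⟩ := Metric.isOpen_iff.1 isOpen_interior c hc
  obtain ⟨u, hu, hux⟩ := Metric.mem_closure_iff.1 hx (ε/2) (by positivity)
  refine mem_interior.2 ⟨Metric.ball (x + c) (ε/2), ?_, Metric.isOpen_ball,
    Metric.mem_ball_self (by positivity)⟩
  intro y hy
  have h1 : y - u ∈ Metric.ball c ε := by
    rw [Metric.mem_ball, dist_eq_norm] at hy ⊢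
    have heq : y - u - c = (y - (x + c)) + (x - u) := by abel
    rw [heq]
    calc ‖(y - (x + c)) + (x - u)‖ ≤ ‖y - (x + c)‖ + ‖x - u‖ := norm_add_le _ _
      _ < ε/2 + ε/2 := by
          refine add_lt_add hy ?_
          rw [← dist_eq_norm]; exact hux
      _ = ε := by ring
  have h2 : y - u ∈ C := interior_subset (hball h1)
  have h3 : y = u + (y - u) := by abel
  rw [h3]; exact hUC u hu _ h2

lemma null_boundary_ball {U : Set (Fin d → ℝ)} {c : Fin d → ℝ}
    (hc : ∀ t : ℝ, 0 < t → ∀ x ∈ closure U, x + t • c ∈ interior U) (R : ℝ) :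
    volume ((closure U \ interior U) ∩ Metric.closedBall 0 R) = 0 := by
  set S : ℕ → Set (Fin d → ℝ) :=
    fun n => interior U ∩ Metric.closedBall 0 (R + ‖c‖/(n+1)) with hS
  have key : ∀ n : ℕ, volume (closure U ∩ Metric.closedBall 0 R) ≤ volume (S n) := by
    intro n
    have tpos : (0:ℝ) < 1/(n+1) := by positivity
    have hsub : closure U ∩ Metric.closedBall 0 R
        ⊆ (fun x => x + (1/(n+1) : ℝ) • c) ⁻¹' (S n) := by
      rintro x ⟨hx1, hx2⟩
      refine ⟨hc _ tpos x hx1, ?_⟩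
      simp only [Metric.mem_closedBall, dist_zero_right] at hx2 ⊢
      calc ‖x + (1/(n+1) : ℝ) • c‖ ≤ ‖x‖ + ‖(1/(n+1) : ℝ) • c‖ := norm_add_le _ _
        _ ≤ R + ‖c‖/(n+1) := by
            refine add_le_add hx2 (le_of_eq ?_)
            rw [norm_smul, Real.norm_eq_abs, abs_of_pos tpos]
            ring
    calc volume (closure U ∩ Metric.closedBall 0 R)
        ≤ volume ((fun x => x + (1/(n+1) : ℝ) • c) ⁻¹' (S n)) := measure_mono hsub
      _ = volume (S n) := measure_preimage_add_right volume _ _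
  have hmono : Antitone S := by
    intro n m hnm
    refine Set.inter_subset_inter_right _ (Metric.closedBall_subset_closedBall ?_)
    have hcast : ((n:ℝ)+1) ≤ (m:ℝ)+1 := by exact_mod_cast Nat.succ_le_succ hnm
    have : ‖c‖/(m+1) ≤ ‖c‖/(n+1) := by gcongr
    linarith
  have hiInter : ⋂ n, S n = interior U ∩ Metric.closedBall 0 R := by
    ext x
    simp only [Set.mem_iInter, hS, Set.mem_inter_iff, Metric.mem_closedBall, dist_zero_right]
    constructor
    · intro h
      refine ⟨(h 0).1, ?_⟩
      refine le_of_forall_pos_le_add fun ε hε => ?_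
      obtain ⟨n, hn⟩ := exists_nat_ge (‖c‖/ε)
      have h2 : ‖c‖/(n+1) ≤ ε := by
        rw [div_le_iff₀ (by positivity)]
        have : ‖c‖ ≤ ε * n := by
          rw [div_le_iff₀ hε] at hn; linarith [hn]
        nlinarith [hε.le]
      calc ‖x‖ ≤ R + ‖c‖/(n+1) := (h n).2
        _ ≤ R + ε := by linarith
    · intro h n
      refine ⟨h.1, le_trans h.2 ?_⟩
      have : (0:ℝ) ≤ ‖c‖/(n+1) := by positivity
      linarith
  have hfin : volume (S 0) ≠ ⊤ := by
    refine ne_top_of_le_ne_top ?_ (measure_mono Set.inter_subset_right)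
    exact ((isCompact_closedBall _ _).measure_lt_top).ne
  have htend : Tendsto (volume ∘ S) atTop (nhds (volume (⋂ n, S n))) :=
    tendsto_measure_iInter_atTop
      (fun n => (isOpen_interior.measurableSet.inter measurableSet_closedBall).nullMeasurableSet)
      hmono ⟨0, hfin⟩
  rw [hiInter] at htend
  have hle : volume (closure U ∩ Metric.closedBall 0 R)
      ≤ volume (interior U ∩ Metric.closedBall 0 R) := ge_of_tendsto' htend key
  have hmeas : MeasurableSet (interior U ∩ Metric.closedBall 0 R) :=
    isOpen_interior.measurableSet.inter measurableSet_closedBall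
  have hfin2 : volume (interior U ∩ Metric.closedBall 0 R) ≠ ⊤ := by
    refine ne_top_of_le_ne_top ?_ (measure_mono Set.inter_subset_right)
    exact ((isCompact_closedBall _ _).measure_lt_top).ne
  have hsub2 : (closure U \ interior U) ∩ Metric.closedBall 0 R
      ⊆ (closure U ∩ Metric.closedBall 0 R) \ (interior U ∩ Metric.closedBall 0 R) := by
    rintro x ⟨⟨hx1, hx2⟩, hx3⟩
    exact ⟨⟨hx1, hx3⟩, fun h => hx2 h.1⟩
  refine measure_mono_null hsub2 ?_
  rw [measure_diff (Set.inter_subset_inter_left _ interior_subset_closure) hmeas.nullMeasurableSet hfin2]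
  · exact tsub_eq_zero_of_le hle
end part2

section part3
variable {d : ℕ}

def cube (d k : ℕ) (z : Fin d → ℤ) : Set (Fin d → ℝ) :=
  Set.pi Set.univ fun i => Set.Ico ((z i : ℝ)/k) ((z i : ℝ)/k + 1/k)

lemma mem_cube_iff {k : ℕ} (hk : 0 < k) (z : Fin d → ℤ) (x : Fin d → ℝ) :
    x ∈ cube d k z ↔ ∀ i, ⌊(k : ℝ) * x i⌋ = z i := by
  have kpos : (0:ℝ) < k := Nat.cast_pos.2 hk
  simp only [cube, Set.mem_pi, Set.mem_univ, forall_true_left, Set.mem_Ico]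
  refine forall_congr' fun i => ?_
  rw [Int.floor_eq_iff]
  constructor
  · rintro ⟨h1, h2⟩
    rw [div_le_iff₀ kpos] at h1
    rw [← add_div, lt_div_iff₀ kpos] at h2
    constructor <;> nlinarith
  · rintro ⟨h1, h2⟩
    constructor
    · rw [div_le_iff₀ kpos]; nlinarith
    · rw [← add_div, lt_div_iff₀ kpos]; nlinarith

lemma cube_volume {k : ℕ} (hk : 0 < k) (z : Fin d → ℤ) :
    volume (cube d k z) = ENNReal.ofReal ((1:ℝ)/k) ^ d := by
  rw [cube, volume_pi_pi]
  simp only [Real.volume_Ico, add_sub_cancel_left]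
  rw [Finset.prod_const, Finset.card_univ, Fintype.card_fin]

lemma cube_measurable (k : ℕ) (z : Fin d → ℤ) : MeasurableSet (cube d k z) :=
  MeasurableSet.univ_pi fun i => measurableSet_Ico

lemma counting_lemma (D : Set (Fin d → ℝ)) (hbd : Bornology.IsBounded D)
    (hfr : volume (frontier D) = 0) :
    Tendsto (fun k : ℕ => (Nat.card ↥((k : ℝ) • D ∩ latticePts d) : ℝ) / (k : ℝ) ^ d)
      atTop (nhds (volume D).toReal) := by
  classical
  have hclosD : volume (closure D) ≠ ⊤ := hbd.isCompact_closure.measure_lt_top.ne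
  have hintD : volume (interior D) = volume D := by
    have h1 : volume (closure D) ≤ volume (interior D) := by
      calc volume (closure D) ≤ volume (interior D ∪ frontier D) :=
            measure_mono (closure_eq_interior_union_frontier D).le
        _ ≤ volume (interior D) + volume (frontier D) := measure_union_le _ _
        _ = volume (interior D) := by rw [hfr, add_zero]
    exact le_antisymm (measure_mono interior_subset)
      ((measure_mono subset_closure).trans h1)
  have hclD : volume (closure D) = volume D := by
    have h1 : volume (closure D) ≤ volume (interior D) := by
      calc volume (closure D) ≤ volume (interior D ∪ frontier D) :=
            measure_mono (closure_eq_interior_union_frontier D).le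
        _ ≤ volume (interior D) + volume (frontier D) := measure_union_le _ _
        _ = volume (interior D) := by rw [hfr, add_zero]
    exact le_antisymm (h1.trans_eq hintD) (measure_mono subset_closure)
  set e : (Fin d → ℤ) → (Fin d → ℝ) := fun z i => (z i : ℝ) with he_def
  have he : Function.Injective e := fun z w h => funext fun i => by
    have := congrFun h i
    simpa [he_def] using this
  have hrange : latticePts d = Set.range e := by
    ext u
    constructor
    · intro h
      choose z hz using h
      exact ⟨z, funext fun i => (hz i).symm⟩
    · rintro ⟨z, rfl⟩ i
      exact ⟨z i, rfl⟩
  set Sk : ℕ → Set (Fin d → ℤ) := fun k => e ⁻¹' ((k:ℝ) • D) with hSk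
  have hfinSk : ∀ k : ℕ, (Sk k).Finite := by
    intro k
    have hb2 : Bornology.IsBounded ((k:ℝ) • D) := hbd.smul₀ _
    obtain ⟨R, hR⟩ := (Metric.isBounded_iff_subset_closedBall 0).1 hb2
    refine Set.Finite.subset (Set.Finite.pi fun i : Fin d => Set.finite_Icc (⌈-R⌉) (⌊R⌋)) ?_
    intro z hz
    have h1 : e z ∈ Metric.closedBall 0 R := hR hz
    rw [Metric.mem_closedBall, dist_zero_right] at h1
    refine Set.mem_univ_pi.2 fun i => Set.mem_Icc.2 ?_
    have h2 : |(z i : ℝ)| ≤ R := by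
      calc |(z i : ℝ)| = ‖e z i‖ := rfl
        _ ≤ ‖e z‖ := norm_le_pi_norm (e z) i
        _ ≤ R := h1
    obtain ⟨h3, h4⟩ := abs_le.1 h2
    exact ⟨Int.ceil_le.2 (by push_cast; linarith), Int.le_floor.2 h4⟩
  have hmemSk : ∀ (k : ℕ), 0 < k → ∀ z : Fin d → ℤ,
      (z ∈ Sk k ↔ (fun i => (z i : ℝ)/k) ∈ D) := by
    intro k hk z
    have kpos : (0:ℝ) < k := Nat.cast_pos.2 hk
    rw [hSk, Set.mem_preimage, Set.mem_smul_set_iff_inv_smul_mem₀ kpos.ne']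
    have : (k:ℝ)⁻¹ • e z = fun i => (z i : ℝ)/k := by
      funext i
      simp [he_def, div_eq_mul_inv, mul_comm]
    rw [this]
  -- the number of lattice points
  have hcard : ∀ k : ℕ, (Nat.card ↥((k : ℝ) • D ∩ latticePts d) : ℝ)
      = ((hfinSk k).toFinset.card : ℝ) := by
    intro k
    congr 1
    rw [hrange, Nat.card_coe_set_eq]
    have h1 : (k:ℝ) • D ∩ Set.range e = e '' (Sk k) := by
      rw [hSk, Set.image_preimage_eq_inter_range]
    rw [h1, Set.ncard_image_of_injective _ he, Set.ncard_eq_toFinset_card _ (hfinSk k)]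
  set A : ℕ → Set (Fin d → ℝ) := fun k => {x | Metric.closedBall x (1/k) ⊆ D} with hA
  set B : ℕ → Set (Fin d → ℝ) := fun k => Metric.cthickening (1/k) D with hB
  have hBfin' : ∀ δ : ℝ, volume (Metric.cthickening δ D) ≠ ⊤ := by
    intro δ
    have hbdd : Bornology.IsBounded (Metric.cthickening δ D) := hbd.cthickening
    obtain ⟨R, hR⟩ := (Metric.isBounded_iff_subset_closedBall 0).1 hbdd
    exact ne_top_of_le_ne_top ((isCompact_closedBall _ _).measure_lt_top).ne (measure_mono hR)
  have hBfin : ∀ k : ℕ, volume (B k) ≠ ⊤ := fun k => hBfin' _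
  -- key inequalities
  have hineq : ∀ k : ℕ, 1 ≤ k →
      (volume (A k)).toReal ≤ ((hfinSk k).toFinset.card : ℝ) / (k:ℝ)^d ∧
      ((hfinSk k).toFinset.card : ℝ) / (k:ℝ)^d ≤ (volume (B k)).toReal := by
    intro k hk
    have kpos : (0:ℝ) < k := Nat.cast_pos.2 hk
    have hrpos : (0:ℝ) < 1/k := by positivity
    set W : Set (Fin d → ℝ) := ⋃ z ∈ (hfinSk k).toFinset, cube d k z with hW
    have hdisj : ((hfinSk k).toFinset : Set (Fin d → ℤ)).PairwiseDisjoint (cube d k) := by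
      intro z _ w _ hzw
      refine Set.disjoint_left.2 fun x hxz hxw => hzw ?_
      funext i
      rw [mem_cube_iff hk] at hxz hxw
      rw [← hxz i, ← hxw i]
    have hWvol : volume W = ((hfinSk k).toFinset.card : ℕ) • ENNReal.ofReal ((1:ℝ)/k) ^ d := by
      rw [hW, measure_biUnion_finset hdisj fun z _ => cube_measurable k z]
      rw [Finset.sum_congr rfl fun z _ => cube_volume hk z, Finset.sum_const]
    have hWvolReal : (volume W).toReal = ((hfinSk k).toFinset.card : ℝ) / (k:ℝ)^d := by
      rw [hWvol]
      rw [nsmul_eq_mul, ENNReal.toReal_mul, ← ENNReal.ofReal_pow (by positivity),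
        ENNReal.toReal_ofReal (by positivity), ENNReal.toReal_natCast]
      rw [div_pow, one_pow, div_eq_mul_inv, div_eq_mul_inv, one_mul]
    have hWfin : volume W ≠ ⊤ := by
      rw [hWvol, nsmul_eq_mul]
      exact ENNReal.mul_ne_top (ENNReal.natCast_ne_top _)
        (ENNReal.pow_ne_top ENNReal.ofReal_ne_top)
    constructor
    · -- A k ⊆ W
      have hsub : A k ⊆ W := by
        intro x hx
        set z : Fin d → ℤ := fun i => ⌊(k:ℝ) * x i⌋ with hz
        have hxz : x ∈ cube d k z := (mem_cube_iff hk z x).2 fun i => rfl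
        have hzS : z ∈ Sk k := by
          rw [hmemSk k hk]
          refine hx ?_
          rw [Metric.mem_closedBall]
          rw [dist_pi_le_iff hrpos.le]
          intro i
          have h1 : ((z i : ℝ))/k ≤ x i ∧ x i < (z i : ℝ)/k + 1/k := by
            have := hxz i (Set.mem_univ i)
            exact this
          rw [Real.dist_eq, abs_le]
          constructor <;> [linarith [h1.2]; linarith [h1.1]]
        exact Set.mem_biUnion ((hfinSk k).mem_toFinset.2 hzS) hxz
      rw [← hWvolReal]
      exact ENNReal.toReal_mono hWfin (measure_mono hsub)
    · -- W ⊆ B k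
      have hsub : W ⊆ B k := by
        rw [hW]
        refine Set.iUnion₂_subset fun z hzF => ?_
        intro x hxz
        have hzS : z ∈ Sk k := (hfinSk k).mem_toFinset.1 hzF
        have hyD : (fun i => (z i : ℝ)/k) ∈ D := (hmemSk k hk z).1 hzS
        refine Metric.mem_cthickening_of_dist_le x _ (1/k) D hyD ?_
        rw [dist_pi_le_iff hrpos.le]
        intro i
        have h1 : ((z i : ℝ))/k ≤ x i ∧ x i < (z i : ℝ)/k + 1/k := hxz i (Set.mem_univ i)
        rw [Real.dist_eq, abs_le]
        constructor <;> [linarith [h1.1]; linarith [h1.2]]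
      rw [← hWvolReal]
      exact ENNReal.toReal_mono (hBfin k) (measure_mono hsub)
  -- limits
  have hAtend : Tendsto (fun k : ℕ => (volume (A k)).toReal) atTop
      (nhds (volume D).toReal) := by
    have hmono : Monotone fun n : ℕ => A (n+1) := by
      intro n m hnm x hx
      refine subset_trans (Metric.closedBall_subset_closedBall ?_) hx
      have h1 : ((n:ℝ)+1) ≤ (m:ℝ)+1 := by exact_mod_cast Nat.succ_le_succ hnm
      have h2 : (0:ℝ) < (n:ℝ)+1 := by positivity
      rw [one_div, one_div]
      push_cast
      gcongr
    have hUnion : (⋃ n : ℕ, A (n+1)) = interior D := by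
      apply Set.Subset.antisymm
      · refine Set.iUnion_subset fun n x hx => ?_
        have hrpos' : (0:ℝ) < 1/((n:ℕ)+1 : ℕ) := by positivity
        exact mem_interior.2 ⟨Metric.ball x (1/((n:ℕ)+1:ℕ)),
          (Metric.ball_subset_closedBall).trans hx, Metric.isOpen_ball,
          Metric.mem_ball_self hrpos'⟩
      · intro x hx
        obtain ⟨ε, εpos, hball⟩ := Metric.isOpen_iff.1 isOpen_interior x hx
        obtain ⟨n, hn⟩ := exists_nat_one_div_lt εpos
        refine Set.mem_iUnion.2 ⟨n, ?_⟩
        intro y hy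
        refine interior_subset (hball ?_)
        rw [Metric.mem_ball]
        calc dist y x ≤ 1/((n:ℕ)+1:ℕ) := hy
          _ < ε := by exact_mod_cast hn
    have h1 : Tendsto (fun n : ℕ => volume (A (n+1))) atTop
        (nhds (volume (interior D))) := by
      have := tendsto_measure_iUnion_atTop (μ := volume) hmono
      rwa [hUnion] at this
    have h2 : Tendsto (fun k : ℕ => volume (A k)) atTop (nhds (volume (interior D))) :=
      (tendsto_add_atTop_iff_nat 1).1 h1
    have hifin : volume (interior D) ≠ ⊤ := by
      rw [hintD]
      exact ne_top_of_le_ne_top hclosD (measure_mono subset_closure)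
    have h3 := (ENNReal.tendsto_toReal hifin).comp h2
    rw [hintD] at h3
    exact h3
  have hBtend : Tendsto (fun k : ℕ => (volume (B k)).toReal) atTop
      (nhds (volume D).toReal) := by
    have htick := tendsto_measure_cthickening (μ := volume) (s := D)
      ⟨1, one_pos, hBfin' 1⟩
    have h1 : Tendsto (fun k : ℕ => (1:ℝ)/k) atTop (nhds 0) :=
      tendsto_one_div_atTop_nhds_zero_nat
    have h2 : Tendsto (fun k : ℕ => volume (B k)) atTop (nhds (volume (closure D))) :=
      htick.comp h1
    have h3 := (ENNReal.tendsto_toReal hclosD).comp h2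
    rw [hclD] at h3
    exact h3
  refine tendsto_of_tendsto_of_tendsto_of_le_of_le' hAtend hBtend ?_ ?_
  · filter_upwards [eventually_ge_atTop 1] with k hk
    rw [hcard k]
    exact (hineq k hk).1
  · filter_upwards [eventually_ge_atTop 1] with k hk
    rw [hcard k]
    exact (hineq k hk).2
end part3


theorem riemann_lattice_point_count
    (d : ℕ) (C : Set (Fin d → ℝ))
    (hCclosed : IsClosed C)
    (hCsmul : ∀ c : ℝ, 0 ≤ c → ∀ u ∈ C, c • u ∈ C)
    (hCadd : ∀ u ∈ C, ∀ v ∈ C, u + v ∈ C)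
    (hfull : Submodule.span ℝ C = ⊤)
    (a : Fin d → ℝ) (ha : ∀ u ∈ C, u ≠ 0 → 0 < pairing u a)
    (α : ℝ) (hα : 0 ≤ α)
    (Γ : Set (Fin d → ℝ)) (hΓ : Γ = {u ∈ C | ¬ pairing u a < α})
    (V : Set (Fin d → ℝ)) (hVC : V ⊆ C) (hVcnt : V.Countable)
    (U : Set (Fin d → ℝ)) (hU : U = V + Γ)
    (b : Fin d → ℝ) (hb : ∀ u ∈ C, u ≠ 0 → 0 < pairing u b)
    (β : ℝ) (hβ : 0 ≤ β)
    (H : Set (Fin d → ℝ)) (hH : H = {u | pairing u b < β})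
    (D : Set (Fin d → ℝ)) (hD : D = U ∩ H) :
    Bornology.IsBounded D ∧ MeasurableSet D ∧
      Tendsto (fun k : ℕ => (Nat.card ↥((k : ℝ) • D ∩ latticePts d) : ℝ) / (k : ℝ) ^ d)
        atTop (nhds (volume D).toReal) := by
  rcases C.eq_empty_or_nonempty with hCe | hCne
  · -- C is empty; everything degenerates
    have hV : V = ∅ := Set.subset_empty_iff.1 (hCe ▸ hVC)
    have hUe : U = ∅ := by rw [hU, hV, Set.empty_add]
    have hDe : D = ∅ := by rw [hD, hUe, Set.empty_inter]
    subst hDe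
    refine ⟨Bornology.isBounded_empty, MeasurableSet.empty, ?_⟩
    have : ∀ k : ℕ, (Nat.card ↥((k : ℝ) • (∅ : Set (Fin d → ℝ)) ∩ latticePts d) : ℝ)
        / (k : ℝ) ^ d = 0 := by
      intro k
      rw [Set.smul_set_empty, Set.empty_inter]
      simp
    simp only [this, measure_empty, ENNReal.toReal_zero]
    exact tendsto_const_nhds
  -- C is nonempty
  obtain ⟨u₁, hu₁⟩ := hCne
  have h0C : (0 : Fin d → ℝ) ∈ C := by
    have := hCsmul 0 le_rfl u₁ hu₁
    simpa using this
  have hΓC : Γ ⊆ C := by rw [hΓ]; exact fun u hu => hu.1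
  have hUC : U ⊆ C := by
    rw [hU]
    rintro x ⟨v, hv, g, hg, rfl⟩
    exact hCadd v (hVC hv) g (hΓC hg)
  -- U is a co-ideal: U + C ⊆ U
  have hUco : ∀ u ∈ U, ∀ c ∈ C, u + c ∈ U := by
    rw [hU]
    rintro x ⟨v, hv, g, hg, rfl⟩ c hc
    refine ⟨v, hv, g + c, ?_, by exact (add_assoc v g c).symm⟩
    rw [hΓ] at hg ⊢
    refine ⟨hCadd g hg.1 c hc, ?_⟩
    have hca : 0 ≤ pairing c a := by
      rcases eq_or_ne c 0 with rfl | hne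
      · simp [pairing_zero]
      · exact (ha c hc hne).le
    have h2 := hg.2
    simp only [not_lt] at h2 ⊢
    rw [pairing_add]
    linarith
  -- C is convex with nonempty interior
  have hconv : Convex ℝ C := by
    intro x hx y hy p q hp hq hpq
    exact hCadd _ (hCsmul p hp x hx) _ (hCsmul q hq y hy)
  have hvs : affineSpan ℝ C = ⊤ := by
    have h1 : vectorSpan ℝ C = ⊤ := by
      rw [vectorSpan_def, eq_top_iff, ← hfull]
      apply Submodule.span_mono
      intro u hu
      exact ⟨u, hu, 0, h0C, by simp⟩
    exact (AffineSubspace.affineSpan_eq_top_iff_vectorSpan_eq_top_of_nonempty ℝ _ _ ⟨u₁, hu₁⟩).2 h1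
  obtain ⟨c, hc⟩ : (interior C).Nonempty :=
    hconv.interior_nonempty_iff_affineSpan_eq_top.2 hvs
  have htrans : ∀ t : ℝ, 0 < t → ∀ x ∈ closure U, x + t • c ∈ interior U :=
    fun t ht x hx => closure_add_int_mem hUco (smul_mem_interior' hCsmul ht hc) hx
  -- boundedness
  have hbddK : Bornology.IsBounded (C ∩ {u | pairing u b ≤ β}) :=
    bounded_trunc C hCclosed hCsmul b hb β hβ
  have hDsub : D ⊆ C ∩ {u | pairing u b ≤ β} := by
    rw [hD, hH]
    rintro x ⟨hx1, hx2⟩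
    refine ⟨hUC hx1, ?_⟩
    exact le_of_lt (show pairing x b < β from hx2)
  have hDbd : Bornology.IsBounded D := hbddK.subset hDsub
  -- measurability
  have hΓclosed : IsClosed Γ := by
    have : Γ = C ∩ (fun u => pairing u a) ⁻¹' (Set.Ici α) := by
      rw [hΓ]
      ext u
      simp only [Set.mem_setOf_eq, Set.mem_inter_iff, Set.mem_preimage, Set.mem_Ici, not_lt]
    rw [this]
    exact hCclosed.inter (isClosed_Ici.preimage (pairing_continuous a))
  have hHopen : IsOpen H := by
    have : H = (fun u => pairing u b) ⁻¹' (Set.Iio β) := by rw [hH]; rfl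
    rw [this]
    exact isOpen_Iio.preimage (pairing_continuous b)
  have hUmeas : MeasurableSet U := by
    have hUeq : U = ⋃ v ∈ V, (fun x => v + x) '' Γ := by
      rw [hU]
      ext x
      constructor
      · rintro ⟨v, hv, g, hg, rfl⟩
        exact Set.mem_biUnion hv ⟨g, hg, rfl⟩
      · intro hx
        obtain ⟨v, hv, g, hg, rfl⟩ := Set.mem_iUnion₂.1 hx
        exact ⟨v, hv, g, hg, rfl⟩
    rw [hUeq]
    refine MeasurableSet.biUnion hVcnt fun v _ => ?_
    have : (fun x => v + x) '' Γ = (fun x => -v + x) ⁻¹' Γ := by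
      ext x
      constructor
      · rintro ⟨g, hg, rfl⟩
        simpa using hg
      · intro hx
        exact ⟨-v + x, hx, add_neg_cancel_left v x⟩
    rw [this]
    exact hΓclosed.measurableSet.preimage (measurable_id.const_add (-v))
  have hDmeas : MeasurableSet D := by
    rw [hD]
    exact hUmeas.inter hHopen.measurableSet
  -- null frontier
  have hfr : volume (frontier D) = 0 := by
    have hsplit : frontier D ⊆ (frontier U ∩ closure H) ∪ (closure U ∩ frontier H) := by
      rw [hD]; exact frontier_inter_subset U H
    refine measure_mono_null hsplit (measure_union_null ?_ ?_)
    · -- frontier U ∩ closure H is null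
      obtain ⟨R, hR⟩ := hbddK.subset_closedBall 0
      have hsub2 : frontier U ∩ closure H
          ⊆ (closure U \ interior U) ∩ Metric.closedBall 0 R := by
        rintro x ⟨hx1, hx2⟩
        have hxC : x ∈ C := by
          have h1 : closure U ⊆ C := by
            rw [← hCclosed.closure_eq]
            exact closure_mono hUC
          exact h1 hx1.1
        have hxβ : pairing x b ≤ β := by
          have h1 : closure H ⊆ (fun u => pairing u b) ⁻¹' (Set.Iic β) := by
            have h2 : H = (fun u => pairing u b) ⁻¹' (Set.Iio β) := by rw [hH]; rfl
            rw [h2]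
            refine ((pairing_continuous b).closure_preimage_subset _).trans ?_
            rw [closure_Iio]
          exact h1 hx2
        exact ⟨⟨hx1.1, hx1.2⟩, hR ⟨hxC, hxβ⟩⟩
      exact measure_mono_null hsub2 (null_boundary_ball htrans R)
    · -- closure U ∩ frontier H is null
      by_cases hb0 : b = 0
      · have hp0 : ∀ u : Fin d → ℝ, pairing u b = 0 := by
          intro u; rw [hb0]; simp [pairing]
        rcases lt_or_ge 0 β with hββ | hββ
        · have : H = Set.univ := by
            rw [hH]; ext u; simp [hp0, hββ]
          rw [this, frontier_univ, Set.inter_empty, measure_empty]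
        · have : H = ∅ := by
            rw [hH]; ext u; simp [hp0]; linarith
          rw [this, frontier_empty, Set.inter_empty, measure_empty]
      · obtain ⟨i, hbi⟩ := Function.ne_iff.1 hb0
        simp only [Pi.zero_apply] at hbi
        have hfrH : frontier H ⊆ {u | pairing u b = β} := by
          have h2 : H = (fun u => pairing u b) ⁻¹' (Set.Iio β) := by rw [hH]; rfl
          rw [h2]
          refine ((pairing_continuous b).frontier_preimage_subset _).trans ?_
          rw [frontier_Iio]
          intro u hu
          exact hu
        refine measure_mono_null ((Set.inter_subset_right).trans hfrH) ?_
        -- the hyperplane is null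
        set Lmap : (Fin d → ℝ) →ₗ[ℝ] ℝ :=
          { toFun := fun u => pairing u b
            map_add' := fun x y => pairing_add x y b
            map_smul' := fun r x => by simp [pairing_smul] } with hLmap
        have hker : LinearMap.ker Lmap ≠ ⊤ := by
          intro h
          have h2 := LinearMap.ker_eq_top.1 h
          have h3 : Lmap (Pi.single i 1) = 0 := by rw [h2]; rfl
          rw [hLmap] at h3
          simp only [LinearMap.coe_mk, AddHom.coe_mk] at h3
          rw [pairing_single] at h3
          exact hbi h3
        have hkernull : volume (LinearMap.ker Lmap : Set (Fin d → ℝ)) = 0 :=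
          MeasureTheory.Measure.addHaar_submodule volume _ hker
        set u₀ : Fin d → ℝ := (β / b i) • (Pi.single i 1 : Fin d → ℝ) with hu₀
        have hpu₀ : pairing u₀ b = β := by
          rw [hu₀, pairing_smul, pairing_single, div_mul_cancel₀ _ hbi]
        have hpre : (fun x => x + u₀) ⁻¹' {u | pairing u b = β}
            = (LinearMap.ker Lmap : Set (Fin d → ℝ)) := by
          ext w
          simp only [Set.mem_preimage, Set.mem_setOf_eq, SetLike.mem_coe,
            LinearMap.mem_ker, hLmap, LinearMap.coe_mk, AddHom.coe_mk]
          rw [pairing_add, hpu₀]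
          constructor <;> intro h <;> linarith
        calc volume {u | pairing u b = β}
            = volume ((fun x => x + u₀) ⁻¹' {u | pairing u b = β}) :=
              (measure_preimage_add_right volume u₀ _).symm
          _ = 0 := by rw [hpre]; exact hkernull
  exact ⟨hDbd, hDmeas, counting_lemma D hDbd hfr⟩
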